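/- Let F be a field of characteristic zero, V an n-dimensional F-vector space, F'/F a field extension, and W ⊆ V ⊗_F F' a line whose conjugates under Aut(F'/F) span V ⊗_F F'. If [F(W) : F] = n, then the stabilizer K of W in End_F(V) satisfies [K : F] = n, i.e., V admits a structure of one-dimensional F(W)-vector space under which W is stabilized. -/

import Mathlib

open TensorProduct
open LinearMap
set_option synthInstance.maxHeartbeats 1000000
set_option maxHeartbeats 2000000
set_option linter.unusedVariables false

section Aux
variable {F F' V : Type*} [Field F] [Field F'] [Algebra F F']
  [AddCommGroup V] [Module F V]

lemma aux_rTensor_smul (σ : F' ≃ₐ[F] F') (d : F') (x : F' ⊗[F] V) :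
    rTensor V σ.toLinearMap (d • x) = σ d • rTensor V σ.toLinearMap x := by
  induction x using TensorProduct.induction_on with
  | zero => simp
  | tmul a v =>
      simp [TensorProduct.smul_tmul', smul_eq_mul, map_mul]
  | add x y hx hy => simp [smul_add, hx, hy]

lemma aux_baseChange_rTensor (φ : Module.End F V) (σ : F' ≃ₐ[F] F') (x : F' ⊗[F] V) :
    baseChange F' φ (rTensor V σ.toLinearMap x) = rTensor V σ.toLinearMap (baseChange F' φ x) := by
  induction x using TensorProduct.induction_on with
  | zero => simp
  | tmul a v => simp
  | add x y hx hy => simp [hx, hy]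

lemma aux_one_tmul_eq_zero {v : V} (h : (1 : F') ⊗ₜ[F] v = 0) : v = 0 := by
  obtain ⟨g, hg⟩ := LinearMap.exists_leftInverse_of_injective (Algebra.linearMap F F')
    (LinearMap.ker_eq_bot.mpr (algebraMap F F').injective)
  have hg1 : g 1 = 1 := by
    have := LinearMap.congr_fun hg 1
    simpa using this
  have h2 := congrArg (fun z => (TensorProduct.lid F V) (rTensor V g z)) h
  simpa [hg1] using h2

end Aux

/-- `W` is defined over the intermediate field `M` of `F'/F`. -/
def IsDefinedOver (F F' : Type*) [Field F] [Field F'] [Algebra F F']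
    (V : Type*) [AddCommGroup V] [Module F V]
    (M : IntermediateField F F') (W : Submodule F' (F' ⊗[F] V)) : Prop :=
  ∃ w : ↥M ⊗[F] V,
    W = Submodule.span F' {LinearMap.rTensor V M.val.toLinearMap w}

/-- `F` characteristic zero, `V` `n`-dimensional, `W ⊆ F' ⊗ V` a line whose
`Aut(F'/F)`-conjugates span.  If the field of definition `M = F(W)` has `[F(W) : F] = n`,
then the stabilizer `K` of `W` in `End_F(V)` satisfies `[K : F] = n`; i.e. `V` carries a
structure of one-dimensional `F(W)`-vector space (an injective `F`-algebra map
`F(W) → End_F(V)`) under which `W` is stabilized. -/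
theorem stabilizer_degree_of_fieldOfDefinition_degree
    (F F' : Type*) [Field F] [CharZero F] [Field F'] [Algebra F F']
    (V : Type*) [AddCommGroup V] [Module F V] [FiniteDimensional F V]
    (n : ℕ) (hV : Module.finrank F V = n)
    (W : Submodule F' (F' ⊗[F] V))
    (hW : Module.finrank F' ↥W = 1)
    (hspan : Submodule.span F'
      (⋃ σ : F' ≃ₐ[F] F',
        (LinearMap.rTensor V σ.toLinearMap) '' (W : Set (F' ⊗[F] V))) = ⊤)
    (M : IntermediateField F F')
    (hdef : IsDefinedOver F F' V M W)
    (hmin : ∀ M' : IntermediateField F F', IsDefinedOver F F' V M' W → M ≤ M')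
    (hMn : Module.finrank F ↥M = n)
    (K : Subalgebra F (Module.End F V))
    (hK : (K : Set (Module.End F V)) =
      {φ : Module.End F V | ∀ x ∈ W, LinearMap.baseChange F' φ x ∈ W}) :
    Module.finrank F ↥K = n ∧
    ∃ ρ : ↥M →ₐ[F] Module.End F V,
      Function.Injective ρ ∧
      ∀ m : ↥M, ∀ x ∈ W, LinearMap.baseChange F' (ρ m) x ∈ W := by
    classical
  -- n is positive
  have hn : 0 < n := by
    rcases Nat.eq_zero_or_pos n with h0 | h; swap; · exact h
    exfalso
    have hfr : Module.finrank F' (F' ⊗[F] V) = 0 := by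
      rw [Module.finrank_baseChange, hV, h0]
    have hle := Submodule.finrank_le W
    rw [hW, hfr] at hle
    omega
  haveI : FiniteDimensional F ↥M := Module.finite_of_finrank_pos (by rw [hMn]; exact hn)
  obtain ⟨w, hWdef⟩ := hdef
  set w' : F' ⊗[F] V := LinearMap.rTensor V M.val.toLinearMap w with hw'def
  set b : Module.Basis (Fin n) F V := Module.finBasisOfFinrankEq F V hV with hb
  set bF' : Module.Basis (Fin n) F' (F' ⊗[F] V) := b.baseChange F' with hbF'
  set bMt : Module.Basis (Fin n) ↥M (↥M ⊗[F] V) := b.baseChange ↥M with hbMt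
  set m : Fin n → ↥M := fun i => bMt.repr w i with hm
  have hwsum : w = ∑ i, (m i) ⊗ₜ[F] b i := by
    conv_lhs => rw [← bMt.sum_repr w]
    refine Finset.sum_congr rfl fun i _ => ?_
    rw [hbMt, Module.Basis.baseChange_apply, TensorProduct.smul_tmul', smul_eq_mul, mul_one]
  have hw'sum : w' = ∑ i, ((m i : F') ⊗ₜ[F] b i) := by
    rw [hw'def, hwsum, map_sum]
    simp [LinearMap.rTensor_tmul]
  have hrepr' : ∀ j, bF'.repr w' j = (m j : F') := by
    intro j
    rw [hw'sum, map_sum]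
    simp [hbF', Finsupp.finset_sum_apply, Module.Basis.baseChange_repr_tmul, Module.Basis.repr_self,
      Finsupp.single_apply]
  have hw'ne : w' ≠ 0 := by
    intro h
    have hbot : W = ⊥ := by rw [hWdef, h, Submodule.span_zero_singleton]
    rw [hbot, finrank_bot] at hW
    exact zero_ne_one hW
  -- conjugates of w'
  have hconj : ∀ σ : F' ≃ₐ[F] F',
      LinearMap.rTensor V σ.toLinearMap w' = ∑ i, (σ (m i : F')) ⊗ₜ[F] b i := by
    intro σ
    rw [hw'sum, map_sum]
    simp [LinearMap.rTensor_tmul]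
  -- linear independence of the coefficients over F
  have hli : LinearIndependent F m := by
    rw [Fintype.linearIndependent_iff]
    intro a ha
    set f : (F' ⊗[F] V) →ₗ[F'] F' := ∑ i, algebraMap F F' (a i) • (bF'.coord i) with hf
    have hfapp : ∀ x, f x = ∑ i, algebraMap F F' (a i) * bF'.repr x i := by
      intro x
      rw [hf]
      simp [LinearMap.sum_apply, Module.Basis.coord_apply, smul_eq_mul, Algebra.smul_def]
    have hfconj : ∀ σ : F' ≃ₐ[F] F', f (LinearMap.rTensor V σ.toLinearMap w') = 0 := by
      intro σ
      rw [hfapp]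
      have hr : ∀ i, bF'.repr (LinearMap.rTensor V σ.toLinearMap w') i = σ (m i : F') := by
        intro i
        rw [hconj σ, map_sum]
        simp [hbF', Finsupp.finset_sum_apply, Module.Basis.baseChange_repr_tmul, Module.Basis.repr_self,
          Finsupp.single_apply]
      calc ∑ i, algebraMap F F' (a i) * bF'.repr (LinearMap.rTensor V σ.toLinearMap w') i
          = ∑ i, σ (algebraMap F F' (a i) * (m i : F')) := by
            refine Finset.sum_congr rfl fun i _ => ?_
            rw [hr i, map_mul, AlgEquiv.commutes]
        _ = σ (M.val (∑ i, a i • m i)) := by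
            rw [map_sum, map_sum]
            refine Finset.sum_congr rfl fun i _ => ?_
            rw [map_smul]
            simp [Algebra.smul_def]
        _ = 0 := by rw [ha]; simp
    have hftop : ∀ x, f x = 0 := by
      have hle : Submodule.span F'
          (⋃ σ : F' ≃ₐ[F] F',
            (LinearMap.rTensor V σ.toLinearMap) '' (W : Set (F' ⊗[F] V))) ≤ LinearMap.ker f := by
        rw [Submodule.span_le]
        rintro x ⟨_, ⟨σ, rfl⟩, y, hyW, rfl⟩
        rw [hWdef] at hyW
        obtain ⟨d, rfl⟩ := Submodule.mem_span_singleton.mp hyW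
        simp only [SetLike.mem_coe, LinearMap.mem_ker]
        rw [aux_rTensor_smul, map_smul, hfconj, smul_zero]
      rw [hspan] at hle
      intro x
      exact hle (Submodule.mem_top) 
    intro j
    have hfj := hftop ((1 : F') ⊗ₜ[F] b j)
    rw [hfapp] at hfj
    have : algebraMap F F' (a j) = 0 := by
      have hrj : ∀ i, bF'.repr ((1 : F') ⊗ₜ[F] b j) i = if j = i then 1 else 0 := by
        intro i
        rw [hbF', Module.Basis.baseChange_repr_tmul]
        simp [Module.Basis.repr_self, Finsupp.single_apply]
      rw [Finset.sum_congr rfl (fun i _ => by rw [hrj i])] at hfj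
      simpa using hfj
    exact (algebraMap F F').injective (by simpa using this)
  haveI : Nonempty (Fin n) := ⟨⟨0, hn⟩⟩
  set bm : Module.Basis (Fin n) F ↥M :=
    basisOfLinearIndependentOfCardEqFinrank hli (by simp [hMn]) with hbmdef
  have hbm : ∀ i, bm i = m i := fun i =>
    congrFun (coe_basisOfLinearIndependentOfCardEqFinrank hli (by simp [hMn])) i
  -- the transpose of left multiplication, as an algebra hom into matrices
  let τ : ↥M →ₐ[F] Matrix (Fin n) (Fin n) F :=
    { toFun := fun x => (Algebra.leftMulMatrix bm x).transpose
      map_one' := by simp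
      map_mul' := fun x y => by
        show ((Algebra.leftMulMatrix bm) (x * y)).transpose = _
        rw [mul_comm x y, map_mul, Matrix.transpose_mul]
      map_zero' := by simp
      map_add' := fun x y => by simp [Matrix.transpose_add]
      commutes' := fun r => by
        show ((Algebra.leftMulMatrix bm) (algebraMap F (↥M) r)).transpose = _
        rw [AlgHom.commutes]
        simp [Matrix.algebraMap_eq_diagonal] }
  set ρ : ↥M →ₐ[F] Module.End F V := ((Matrix.toLinAlgEquiv b).toAlgHom).comp τ with hρdef
  have hρapp : ∀ (m₀ : ↥M) (i : Fin n),
      ρ m₀ (b i) = ∑ j, Algebra.leftMulMatrix bm m₀ i j • b j := by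
    intro m₀ i
    show Matrix.toLinAlgEquiv b ((Algebra.leftMulMatrix bm m₀).transpose) (b i) = _
    rw [Matrix.toLinAlgEquiv_self]
    simp [Matrix.transpose_apply]
  -- the key identity
  have hρ : ∀ m₀ : ↥M, baseChange F' (ρ m₀) w' = (m₀ : F') • w' := by
    intro m₀
    set A : Matrix (Fin n) (Fin n) F := Algebra.leftMulMatrix bm m₀ with hA
    have key : ∀ j, (∑ i, A i j • (m i : F')) = (m₀ : F') * (m j : F') := by
      intro j
      have h1 : (∑ i, A i j • m i) = m₀ * m j := by
        have h2 := bm.sum_repr (m₀ * bm j)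
        calc (∑ i, A i j • m i) = ∑ i, bm.repr (m₀ * bm j) i • bm i := by
              refine Finset.sum_congr rfl fun i _ => ?_
              rw [hA, Algebra.leftMulMatrix_eq_repr_mul, hbm i]
          _ = m₀ * bm j := h2
          _ = m₀ * m j := by rw [hbm j]
      calc (∑ i, A i j • (m i : F')) = M.val (∑ i, A i j • m i) := by
            rw [map_sum]
            refine Finset.sum_congr rfl fun i _ => ?_
            rw [map_smul]
            rfl
        _ = M.val (m₀ * m j) := by rw [h1]
        _ = (m₀ : F') * (m j : F') := by rw [map_mul]; rfl
    calc baseChange F' (ρ m₀) w' = ∑ i, (m i : F') ⊗ₜ[F] (ρ m₀ (b i)) := by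
          rw [hw'sum, map_sum]
          simp [LinearMap.baseChange_tmul]
      _ = ∑ i, ∑ j, A i j • ((m i : F') ⊗ₜ[F] b j) := by
          refine Finset.sum_congr rfl fun i _ => ?_
          rw [hρapp m₀ i, TensorProduct.tmul_sum]
          exact Finset.sum_congr rfl fun j _ => TensorProduct.tmul_smul _ _ _
      _ = ∑ j, ∑ i, A i j • ((m i : F') ⊗ₜ[F] b j) := Finset.sum_comm
      _ = ∑ j, ((∑ i, A i j • (m i : F')) ⊗ₜ[F] b j) := by
          refine Finset.sum_congr rfl fun j _ => ?_
          rw [TensorProduct.sum_tmul]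
          refine Finset.sum_congr rfl fun i _ => ?_
          rw [TensorProduct.smul_tmul']
      _ = ∑ j, (((m₀ : F') * (m j : F')) ⊗ₜ[F] b j) := by
          exact Finset.sum_congr rfl fun j _ => by rw [key j]
      _ = (m₀ : F') • w' := by
          rw [hw'sum, Finset.smul_sum]
          refine Finset.sum_congr rfl fun j _ => ?_
          rw [TensorProduct.smul_tmul', smul_eq_mul]
  -- ρ stabilizes W
  have hstab : ∀ m₀ : ↥M, ∀ x ∈ W, baseChange F' (ρ m₀) x ∈ W := by
    intro m₀ x hx
    rw [hWdef] at hx ⊢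
    obtain ⟨d, rfl⟩ := Submodule.mem_span_singleton.mp hx
    rw [map_smul, hρ]
    exact Submodule.smul_mem _ _ (Submodule.smul_mem _ _ (Submodule.mem_span_singleton_self _))
  -- injectivity of ρ
  haveI : Nontrivial V := Module.finrank_pos_iff.mp (by rw [hV]; exact hn)
  have hρinj : Function.Injective ρ := by
    have h := RingHom.injective (ρ : ↥M →+* Module.End F V)
    exact fun a b hab => h (by exact hab)
  -- vanishing on w' forces zero
  have hzero : ∀ ψ : Module.End F V, baseChange F' ψ w' = 0 → ψ = 0 := by
    intro ψ h0
    have hbc : ∀ x, baseChange F' ψ x = 0 := by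
      have hle : Submodule.span F' (⋃ σ : F' ≃ₐ[F] F',
          (LinearMap.rTensor V σ.toLinearMap) '' (W : Set (F' ⊗[F] V)))
          ≤ LinearMap.ker (baseChange F' ψ) := by
        rw [Submodule.span_le]
        rintro x ⟨_, ⟨σ, rfl⟩, y, hyW, rfl⟩
        rw [hWdef] at hyW
        obtain ⟨d, rfl⟩ := Submodule.mem_span_singleton.mp hyW
        simp only [SetLike.mem_coe, LinearMap.mem_ker]
        rw [aux_rTensor_smul, map_smul, aux_baseChange_rTensor, h0, map_zero, smul_zero]
      rw [hspan] at hle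
      intro x; exact hle Submodule.mem_top
    ext v
    have h1 := hbc ((1 : F') ⊗ₜ[F] v)
    rw [LinearMap.baseChange_tmul] at h1
    simpa using aux_one_tmul_eq_zero h1
  -- every element of K is of the form ρ m₀
  have hKeq : ∀ φ, φ ∈ K → ∃ m₀ : ↥M, ρ m₀ = φ := by
    intro φ hφ
    have hφW : baseChange F' φ w' ∈ W := by
      have hmem : φ ∈ {φ : Module.End F V | ∀ x ∈ W, baseChange F' φ x ∈ W} := by
        rw [← hK]; exact hφ
      exact hmem w' (by rw [hWdef]; exact Submodule.mem_span_singleton_self _)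
    rw [hWdef] at hφW
    obtain ⟨c, hc⟩ := Submodule.mem_span_singleton.mp hφW
    have e0 : baseChange F' φ w' = ∑ i, ((m i : F') ⊗ₜ[F] φ (b i)) := by
      rw [hw'sum, map_sum]; simp [LinearMap.baseChange_tmul]
    have hcj : ∀ j, c * (m j : F') = ((∑ i, (b.repr (φ (b i)) j) • m i : ↥M) : F') := by
      intro j
      have e1 : bF'.repr (baseChange F' φ w') j = ∑ i, (b.repr (φ (b i)) j) • (m i : F') := by
        rw [e0, map_sum]
        simp [hbF', Finsupp.finset_sum_apply, Module.Basis.baseChange_repr_tmul, Algebra.smul_def]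
      have e2 : bF'.repr (baseChange F' φ w') j = c * (m j : F') := by
        rw [← hc, map_smul]
        simp [hrepr' j, smul_eq_mul]
      have e3 : ((∑ i, (b.repr (φ (b i)) j) • m i : ↥M) : F')
          = ∑ i, (b.repr (φ (b i)) j) • (m i : F') := by
        show M.val _ = _
        rw [map_sum]
        exact Finset.sum_congr rfl fun i _ => by rw [map_smul]; rfl
      rw [e3]
      exact e2.symm.trans e1
    set j0 : Fin n := ⟨0, hn⟩ with hj0def
    have hj0 : m j0 ≠ 0 := by have := bm.ne_zero j0; rwa [hbm] at this
    have hmj : (m j0 : F') ≠ 0 := fun h => hj0 (by simpa using h)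
    have hcM : c ∈ M := by
      have h := hcj j0
      have hceq : c = ((∑ i, (b.repr (φ (b i)) j0) • m i : ↥M) : F') * ((m j0 : F'))⁻¹ := by
        rw [eq_mul_inv_iff_mul_eq₀ hmj]
        exact h
      rw [hceq]
      exact M.mul_mem (SetLike.coe_mem _) (M.inv_mem (SetLike.coe_mem _))
    refine ⟨⟨c, hcM⟩, ?_⟩
    have hsub : baseChange F' (ρ ⟨c, hcM⟩ - φ) w' = 0 := by
      rw [LinearMap.baseChange_sub, LinearMap.sub_apply, hρ, ← hc]
      show c • w' - c • w' = 0
      rw [sub_self]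
    exact sub_eq_zero.mp (hzero _ hsub)
  -- K equals the range of ρ
  have hKr : Subalgebra.toSubmodule K = LinearMap.range ρ.toLinearMap := by
    ext φ
    simp only [Subalgebra.mem_toSubmodule, LinearMap.mem_range]
    constructor
    · intro h
      obtain ⟨m₀, hm₀⟩ := hKeq φ h
      exact ⟨m₀, hm₀⟩
    · rintro ⟨m₀, rfl⟩
      have hmem : ρ m₀ ∈ {φ : Module.End F V | ∀ x ∈ W, baseChange F' φ x ∈ W} := hstab m₀
      rw [← hK] at hmem
      exact hmem
  have hfr : Module.finrank F ↥K = Module.finrank F ↥M := by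
    have e : ↥M ≃ₗ[F] ↥(LinearMap.range ρ.toLinearMap) :=
      LinearEquiv.ofInjective ρ.toLinearMap (by exact hρinj)
    calc Module.finrank F ↥K = Module.finrank F (Subalgebra.toSubmodule K) := rfl
      _ = Module.finrank F (LinearMap.range ρ.toLinearMap) := by rw [hKr]
      _ = Module.finrank F ↥M := (LinearEquiv.finrank_eq e).symm
  exact ⟨hfr.trans hMn, ρ, hρinj, hstab⟩
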